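/- Let β ∈ (−1,1). Then ∫₁^∞ x^{−2−β} |log|1−x|| dx < ∞, and as β → −1⁺ the quantity 1 − (2(1+β)/π)·cot((1−β)π/2)·∫₁^∞ x^{−2−β} log|1−x| dx is bounded below by c·(1+β)^{−2} for some constant c > 0. -/

import Mathlib

open Real MeasureTheory Filter Set Topology


lemma int_sqrt : IntegrableOn (fun x : ℝ => (x - 1) ^ (-(1:ℝ)/2)) (Set.Ioc 1 2) := by
  have h : IntervalIntegrable (fun x : ℝ => x ^ (-(1:ℝ)/2)) volume 0 1 :=
    intervalIntegral.intervalIntegrable_rpow' (by norm_num)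
  have h2 := h.comp_sub_right 1
  rw [intervalIntegrable_iff_integrableOn_Ioc_of_le (by norm_num)] at h2
  norm_num at h2
  rw [neg_div]; exact h2

lemma log_bound {x : ℝ} (h1 : 1 < x) (h2 : x ≤ 2) :
    abs (Real.log |1 - x|) ≤ 2 * (x - 1) ^ (-(1:ℝ)/2) := by
  have hx1 : 0 < x - 1 := by linarith
  have habs : |1 - x| = x - 1 := by rw [abs_sub_comm]; exact abs_of_pos hx1
  rw [habs]
  have hle : Real.log (x - 1) ≤ 0 := Real.log_nonpos hx1.le (by linarith)
  rw [abs_of_nonpos hle, ← Real.log_inv]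
  calc Real.log (x-1)⁻¹ ≤ ((x-1)⁻¹) ^ ((1:ℝ)/2) / ((1:ℝ)/2) :=
        Real.log_le_rpow_div (by positivity) (by norm_num)
    _ = 2 * (x - 1) ^ (-(1:ℝ)/2) := by
        rw [Real.inv_rpow hx1.le, ← Real.rpow_neg hx1.le]
        ring_nf

-- integrable x^(-2-β) log x on Ioi 2
lemma intOn_log {β : ℝ} (hβ : -1 < β) :
    IntegrableOn (fun x : ℝ => x ^ (-2 - β) * Real.log x) (Set.Ioi 2) := by
  have hε : (0:ℝ) < (1 + β) / 2 := by linarith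
  apply Integrable.mono' (g := fun x : ℝ => x ^ (-(3 + β)/2) / ((1+β)/2))
  · exact (integrableOn_Ioi_rpow_of_lt (by linarith) (by norm_num)).div_const _
  · apply Measurable.aestronglyMeasurable; measurability
  · filter_upwards [ae_restrict_mem measurableSet_Ioi] with x hx
    have hx2 : (2:ℝ) < x := hx
    have hx0 : (0:ℝ) < x := by linarith
    have h1 : Real.log x ≤ x ^ ((1+β)/2) / ((1+β)/2) := Real.log_le_rpow_div hx0.le hε
    have h2 : (0:ℝ) ≤ Real.log x := Real.log_nonneg (by linarith)
    have h3 : (0:ℝ) ≤ x ^ (-2 - β) := Real.rpow_nonneg hx0.le _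
    rw [Real.norm_eq_abs, abs_of_nonneg (mul_nonneg h3 h2)]
    calc x ^ (-2 - β) * Real.log x ≤ x ^ (-2 - β) * (x ^ ((1+β)/2) / ((1+β)/2)) := by
          exact mul_le_mul_of_nonneg_left h1 h3
      _ = x ^ (-(3 + β)/2) / ((1+β)/2) := by
          rw [mul_div_assoc', ← Real.rpow_add hx0]; ring_nf

lemma part1 {β : ℝ} (hβ : -1 < β) :
    IntegrableOn (fun x : ℝ => x ^ (-2 - β) * abs (Real.log |1 - x|)) (Set.Ioi 1) := by
  have hmeas2 := 0
  have mf : Measurable (fun x : ℝ => x ^ (-2 - β) * abs (Real.log |1 - x|)) := by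
    have m1 : Measurable (fun x : ℝ => x ^ (-2 - β)) := by measurability
    exact m1.mul ((Real.measurable_log.comp (measurable_const.sub measurable_id).abs).abs)
  have hmeas : AEStronglyMeasurable (fun x : ℝ => x ^ (-2 - β) * abs (Real.log |1 - x|))
      (volume.restrict (Set.Ioi 1)) := mf.aestronglyMeasurable
  have h12 : IntegrableOn (fun x : ℝ => x ^ (-2 - β) * abs (Real.log |1 - x|)) (Set.Ioc 1 2) := by
    apply Integrable.mono' (g := fun x : ℝ => 2 * (x - 1) ^ (-(1:ℝ)/2))
    · exact int_sqrt.const_mul 2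
    · exact mf.aestronglyMeasurable
    · filter_upwards [ae_restrict_mem measurableSet_Ioc] with x hx
      have h1 : 1 < x := hx.1
      have h0 : (0:ℝ) < x := by linarith
      have hpow : x ^ (-2 - β) ≤ 1 :=
        Real.rpow_le_one_of_one_le_of_nonpos h1.le (by linarith)
      have hpow0 : (0:ℝ) ≤ x ^ (-2 - β) := Real.rpow_nonneg h0.le _
      rw [Real.norm_eq_abs, abs_of_nonneg (mul_nonneg hpow0 (abs_nonneg _))]
      calc x ^ (-2 - β) * abs (Real.log |1 - x|) ≤ 1 * abs (Real.log |1 - x|) :=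
            mul_le_mul_of_nonneg_right hpow (abs_nonneg _)
        _ = abs (Real.log |1 - x|) := one_mul _
        _ ≤ 2 * (x - 1) ^ (-(1:ℝ)/2) := log_bound h1 hx.2
  have h2i : IntegrableOn (fun x : ℝ => x ^ (-2 - β) * abs (Real.log |1 - x|)) (Set.Ioi 2) := by
    apply Integrable.mono' (g := fun x : ℝ => x ^ (-2 - β) * Real.log x)
    · exact intOn_log hβ
    · exact hmeas.mono_measure (Measure.restrict_mono (fun x hx => by simp at *; linarith) le_rfl)
    · filter_upwards [ae_restrict_mem measurableSet_Ioi] with x hx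
      have h2 : (2:ℝ) < x := hx
      have h0 : (0:ℝ) < x := by linarith
      have habs : |1 - x| = x - 1 := by rw [abs_sub_comm]; exact abs_of_pos (by linarith)
      have hpow0 : (0:ℝ) ≤ x ^ (-2 - β) := Real.rpow_nonneg h0.le _
      have hlog0 : (0:ℝ) ≤ Real.log (x - 1) := Real.log_nonneg (by linarith)
      rw [Real.norm_eq_abs, habs, abs_of_nonneg (mul_nonneg hpow0 (abs_nonneg _)),
        abs_of_nonneg hlog0]
      exact mul_le_mul_of_nonneg_left (Real.log_le_log (by linarith) (by linarith)) hpow0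
  have := h12.union h2i
  rwa [Set.Ioc_union_Ioi_eq_Ioi (by norm_num : (1:ℝ) ≤ 2)] at this

lemma intOn_tail {β : ℝ} (hβ : -1 < β) :
    IntegrableOn (fun x : ℝ => x ^ (-2 - β) * (Real.log x - Real.log 2)) (Set.Ioi 2) := by
  apply Integrable.mono' (intOn_log hβ)
  · apply Measurable.aestronglyMeasurable
    have m1 : Measurable (fun x : ℝ => x ^ (-2 - β)) := by measurability
    exact m1.mul (Real.measurable_log.sub measurable_const)
  · filter_upwards [ae_restrict_mem measurableSet_Ioi] with x hx
    have h2 : (2:ℝ) < x := hx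
    have hpow0 : (0:ℝ) ≤ x ^ (-2 - β) := Real.rpow_nonneg (by linarith) _
    have hl2 : (0:ℝ) ≤ Real.log 2 := Real.log_nonneg (by norm_num)
    have hll : Real.log 2 ≤ Real.log x := Real.log_le_log (by norm_num) (by linarith)
    rw [Real.norm_eq_abs, abs_of_nonneg (mul_nonneg hpow0 (by linarith))]
    apply mul_le_mul_of_nonneg_left (by linarith) hpow0

lemma tail_integral {β : ℝ} (hβ : -1 < β) :
    ∫ x in Set.Ioi (2:ℝ), x ^ (-2 - β) * (Real.log x - Real.log 2)
      = 2 ^ (-1 - β) / (1 + β) ^ 2 := by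
  set p : ℝ := -1 - β with hp
  have hp0 : p < 0 := by simp [hp]; linarith
  have hpne : p ≠ 0 := hp0.ne
  set F : ℝ → ℝ := fun x => x ^ p * (p * (Real.log x - Real.log 2) - 1) / p ^ 2 with hF
  have hderiv : ∀ x ∈ Set.Ici (2:ℝ), HasDerivAt F (x ^ (-2 - β) * (Real.log x - Real.log 2)) x := by
    intro x hx
    have hx0 : (0:ℝ) < x := by simp at hx; linarith
    have d1 : HasDerivAt (fun y : ℝ => y ^ p) (p * x ^ (p - 1)) x :=
      Real.hasDerivAt_rpow_const (Or.inl hx0.ne')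
    have d2 : HasDerivAt (fun y : ℝ => p * (Real.log y - Real.log 2) - 1) (p * x⁻¹) x := by
      simpa using ((Real.hasDerivAt_log hx0.ne').sub_const (Real.log 2)).const_mul p |>.sub_const 1
    have d3 := (d1.mul d2).div_const (p ^ 2)
    refine d3.congr_deriv ?_
    have e1 : x ^ p * x⁻¹ = x ^ (p - 1) := by
      rw [show x⁻¹ = x ^ (-1:ℝ) by rw [Real.rpow_neg_one], ← Real.rpow_add hx0,
        sub_eq_add_neg]
    rw [show (-2 - β : ℝ) = p - 1 by rw [hp]; ring, ← e1]
    field_simp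
    ring
  have htend : Tendsto F atTop (𝓝 0) := by
    have hmp : (0:ℝ) < -p := by linarith
    have h1 : Tendsto (fun x : ℝ => x ^ p * Real.log x) atTop (𝓝 0) := by
      have := (isLittleO_log_rpow_atTop hmp).tendsto_div_nhds_zero
      apply this.congr'
      filter_upwards [Filter.eventually_gt_atTop (0:ℝ)] with x hx0
      rw [Real.rpow_neg hx0.le, div_eq_mul_inv, inv_inv, mul_comm]
    have h2 : Tendsto (fun x : ℝ => x ^ p) atTop (𝓝 0) := by
      simpa using tendsto_rpow_neg_atTop hmp
    have h3 : Tendsto (fun x : ℝ => (p * (x ^ p * Real.log x) - (p * Real.log 2 + 1) * x ^ p) / p ^ 2)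
        atTop (𝓝 ((p * 0 - (p * Real.log 2 + 1) * 0) / p ^ 2)) :=
      ((h1.const_mul p).sub (h2.const_mul _)).div_const _
    simp only [mul_zero, sub_zero, zero_sub, zero_div] at h3
    norm_num at h3
    apply h3.congr
    intro x
    simp only [hF]
    ring
  have key := integral_Ioi_of_hasDerivAt_of_tendsto' hderiv (intOn_tail hβ) htend
  rw [key]
  have hF2 : F 2 = -(2 ^ p / p ^ 2) := by
    simp only [hF, sub_self, mul_zero, zero_sub]
    ring
  rw [hF2, hp, show ((-1 - β : ℝ)) ^ 2 = (1 + β) ^ 2 by ring]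
  ring

lemma sqrt_integral : ∫ x in Set.Ioc (1:ℝ) 2, (x - 1) ^ (-(1:ℝ)/2) = 2 := by
  rw [← intervalIntegral.integral_of_le (by norm_num : (1:ℝ) ≤ 2)]
  have : (∫ x in (1:ℝ)..2, (x - 1) ^ (-(1:ℝ)/2)) = ∫ x in (0:ℝ)..1, x ^ (-(1:ℝ)/2) := by
    have := intervalIntegral.integral_comp_sub_right (a := (1:ℝ)) (b := 2)
      (fun x : ℝ => x ^ (-(1:ℝ)/2)) 1
    norm_num at this
    convert this using 3 <;> norm_num
  rw [this, integral_rpow (Or.inl (by norm_num))]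
  norm_num

set_option maxHeartbeats 2000000 in
/-- for `β ∈ (−1,1)`, `∫₁^∞ x^{−2−β}|log|1−x|| dx < ∞`; and as `β → −1⁺` the
quantity `1 − (2(1+β)/π)·cot((1−β)π/2)·∫₁^∞ x^{−2−β} log|1−x| dx` is bounded below by
`c·(1+β)^{−2}` for some constant `c > 0`. -/
theorem stmt18 :
    (∀ β : ℝ, -1 < β → β < 1 →
      IntegrableOn (fun x : ℝ => x ^ (-2 - β) * abs (Real.log |1 - x|)) (Set.Ioi 1)) ∧
    ∃ c : ℝ, 0 < c ∧ ∀ᶠ β in nhdsWithin (-1 : ℝ) (Set.Ioi (-1)),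
      c / (1 + β) ^ 2 ≤
        1 - (2 * (1 + β) / π) * (Real.cos ((1 - β) * π / 2) / Real.sin ((1 - β) * π / 2)) *
          ∫ x in Set.Ioi (1 : ℝ), x ^ (-2 - β) * Real.log |1 - x| := by
  constructor
  · intro β hβ _
    exact part1 hβ
  refine ⟨1/20, by norm_num, ?_⟩
  filter_upwards [Ioo_mem_nhdsGT_of_mem (by norm_num : (-1:ℝ) ∈ Set.Ico (-1:ℝ) (-9/10))]
    with β hβmem
  obtain ⟨hβ1, hβ2⟩ := hβmem
  have ht0 : 0 < 1 + β := by linarith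
  have ht1 : 1 + β < 1/10 := by linarith
  have ht2 : (0:ℝ) < (1 + β) ^ 2 := pow_pos ht0 2
  -- measurability of the integrand
  have mf : Measurable (fun x : ℝ => x ^ (-2 - β) * Real.log |1 - x|) := by
    have m1 : Measurable (fun x : ℝ => x ^ (-2 - β)) := by measurability
    exact m1.mul (Real.measurable_log.comp (measurable_const.sub measurable_id).abs)
  -- integrability of the signed integrand
  have hI : IntegrableOn (fun x : ℝ => x ^ (-2 - β) * Real.log |1 - x|) (Set.Ioi 1) := by
    apply Integrable.mono' (part1 hβ1) mf.aestronglyMeasurable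
    filter_upwards [ae_restrict_mem measurableSet_Ioi] with x hx
    have hx1 : (1:ℝ) < x := hx
    have hpow0 : (0:ℝ) ≤ x ^ (-2 - β) := Real.rpow_nonneg (by linarith) _
    rw [Real.norm_eq_abs, abs_mul, abs_of_nonneg hpow0]
  have hIoc : IntegrableOn (fun x : ℝ => x ^ (-2 - β) * Real.log |1 - x|) (Set.Ioc 1 2) :=
    hI.mono_set (fun x hx => hx.1)
  have hIoi2 : IntegrableOn (fun x : ℝ => x ^ (-2 - β) * Real.log |1 - x|) (Set.Ioi 2) :=
    hI.mono_set (fun x hx => by simp at *; linarith)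
  have hsplit : (∫ x in Set.Ioi (1:ℝ), x ^ (-2 - β) * Real.log |1 - x|)
      = (∫ x in Set.Ioc (1:ℝ) 2, x ^ (-2 - β) * Real.log |1 - x|)
        + ∫ x in Set.Ioi (2:ℝ), x ^ (-2 - β) * Real.log |1 - x| := by
    rw [← setIntegral_union (Set.Ioc_disjoint_Ioi le_rfl) measurableSet_Ioi hIoc hIoi2,
      Set.Ioc_union_Ioi_eq_Ioi (by norm_num : (1:ℝ) ≤ 2)]
  -- lower bound the Ioc piece by -4
  have hI1 : -4 ≤ ∫ x in Set.Ioc (1:ℝ) 2, x ^ (-2 - β) * Real.log |1 - x| := by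
    have hmono : (∫ x in Set.Ioc (1:ℝ) 2, -(2 * (x - 1) ^ (-(1:ℝ)/2)))
        ≤ ∫ x in Set.Ioc (1:ℝ) 2, x ^ (-2 - β) * Real.log |1 - x| := by
      apply setIntegral_mono_on ((int_sqrt.const_mul 2).neg) hIoc measurableSet_Ioc
      intro x hx
      have hx1 : (1:ℝ) < x := hx.1
      have hpow : x ^ (-2 - β) ≤ 1 :=
        Real.rpow_le_one_of_one_le_of_nonpos hx1.le (by linarith)
      have hpow0 : (0:ℝ) ≤ x ^ (-2 - β) := Real.rpow_nonneg (by linarith) _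
      have hb := log_bound hx1 hx.2
      have habs : abs (x ^ (-2 - β) * Real.log |1 - x|) ≤ 2 * (x - 1) ^ (-(1:ℝ)/2) := by
        rw [abs_mul, abs_of_nonneg hpow0]
        calc x ^ (-2 - β) * abs (Real.log |1 - x|) ≤ 1 * abs (Real.log |1 - x|) :=
              mul_le_mul_of_nonneg_right hpow (abs_nonneg _)
          _ = abs (Real.log |1 - x|) := one_mul _
          _ ≤ 2 * (x - 1) ^ (-(1:ℝ)/2) := hb
      simp only [Pi.neg_apply]
      linarith [neg_abs_le (x ^ (-2 - β) * Real.log |1 - x|)]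
    have hval : (∫ x in Set.Ioc (1:ℝ) 2, -(2 * (x - 1) ^ (-(1:ℝ)/2))) = -4 := by
      rw [integral_neg, integral_const_mul, sqrt_integral]
      norm_num
    linarith [hmono, hval.symm.le]
  -- lower bound the Ioi 2 piece
  have hI2 : 1 / (2 * (1 + β) ^ 2) ≤ ∫ x in Set.Ioi (2:ℝ), x ^ (-2 - β) * Real.log |1 - x| := by
    have hmono : (∫ x in Set.Ioi (2:ℝ), x ^ (-2 - β) * (Real.log x - Real.log 2))
        ≤ ∫ x in Set.Ioi (2:ℝ), x ^ (-2 - β) * Real.log |1 - x| := by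
      apply setIntegral_mono_on (intOn_tail hβ1) hIoi2 measurableSet_Ioi
      intro x hx
      have hx2 : (2:ℝ) < x := hx
      have hpow0 : (0:ℝ) ≤ x ^ (-2 - β) := Real.rpow_nonneg (by linarith) _
      have habs : |1 - x| = x - 1 := by rw [abs_sub_comm]; exact abs_of_pos (by linarith)
      rw [habs, ← Real.log_div (by linarith) (by norm_num)]
      apply mul_le_mul_of_nonneg_left _ hpow0
      apply Real.log_le_log (by positivity)
      linarith
    have hval := tail_integral hβ1
    have h2p : (1:ℝ)/2 ≤ (2:ℝ) ^ (-1 - β) := by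
      have : (2:ℝ) ^ (-1:ℝ) ≤ (2:ℝ) ^ (-1 - β) :=
        Real.rpow_le_rpow_of_exponent_le (by norm_num) (by linarith)
      rwa [Real.rpow_neg_one, show ((2:ℝ)⁻¹) = 1/2 by norm_num] at this
    have hle : 1 / (2 * (1 + β) ^ 2) ≤ 2 ^ (-1 - β) / (1 + β) ^ 2 := by
      rw [div_le_div_iff₀ (by positivity) ht2]
      nlinarith
    rw [hval] at hmono
    linarith [hmono, hle]
  -- trig manipulation
  rw [show (1 - β) * π / 2 = π - (1 + β) * π / 2 by ring, Real.cos_pi_sub, Real.sin_pi_sub,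
    neg_div, mul_neg, neg_mul, sub_neg_eq_add]
  have hπ1 : 3 < π := Real.pi_gt_three
  have hπ2 : π < 3.15 := Real.pi_lt_d2
  set φ : ℝ := (1 + β) * π / 2 with hφ
  have hφ0 : 0 < φ := by rw [hφ]; positivity
  have hφ1 : φ < 0.16 := by rw [hφ]; nlinarith
  have hφsq : φ ^ 2 < 1 := by nlinarith
  have hsin_le : Real.sin φ ≤ φ := Real.sin_le hφ0.le
  have hsin_gt : φ / 2 < Real.sin φ := by
    have h := Real.sin_gt_sub_cube hφ0
    nlinarith [mul_lt_mul_of_pos_left hφsq hφ0]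
  have hsin0 : 0 < Real.sin φ := by linarith
  have hcos_ge : (1:ℝ)/2 ≤ Real.cos φ := by
    have := Real.one_sub_sq_div_two_le_cos (x := φ)
    nlinarith
  have hcos_le : Real.cos φ ≤ 1 := Real.cos_le_one φ
  set K : ℝ := 2 * (1 + β) / π * (Real.cos φ / Real.sin φ) with hK
  have hK1 : 2 / π ^ 2 ≤ K := by
    have hd : (1:ℝ)/2 / φ ≤ Real.cos φ / Real.sin φ :=
      div_le_div₀ (by linarith) hcos_ge hsin0 hsin_le
    have h2t : (0:ℝ) ≤ 2 * (1 + β) / π := by positivity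
    have hmul := mul_le_mul_of_nonneg_left hd h2t
    rw [← hK] at hmul
    have heq : 2 * (1 + β) / π * ((1:ℝ)/2 / φ) = 2 / π ^ 2 := by
      rw [hφ]
      field_simp
    rw [heq] at hmul
    linarith
  have hK2 : K ≤ 1 := by
    have hd : Real.cos φ / Real.sin φ ≤ 1 / (φ/2) :=
      div_le_div₀ zero_le_one hcos_le (by positivity) hsin_gt.le
    have h2t : (0:ℝ) ≤ 2 * (1 + β) / π := by positivity
    have hmul := mul_le_mul_of_nonneg_left hd h2t
    rw [← hK] at hmul
    have heq : 2 * (1 + β) / π * (1 / (φ/2)) = 8 / π ^ 2 := by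
      rw [hφ]
      field_simp
      ring
    have h8 : (8:ℝ) / π ^ 2 ≤ 1 := by
      rw [div_le_one (by positivity)]
      nlinarith
    rw [heq] at hmul
    linarith
  have hK0 : 0 < K := lt_of_lt_of_le (by positivity) hK1
  -- final assembly
  rw [hsplit]
  set I1 := ∫ x in Set.Ioc (1:ℝ) 2, x ^ (-2 - β) * Real.log |1 - x| with hI1d
  set I2 := ∫ x in Set.Ioi (2:ℝ), x ^ (-2 - β) * Real.log |1 - x| with hI2d
  have hKI1 : -4 ≤ K * I1 := by
    rcases le_or_gt 0 I1 with h | h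
    · nlinarith [mul_nonneg hK0.le h]
    · nlinarith [mul_nonneg (by linarith : (0:ℝ) ≤ 1 - K) (by linarith : (0:ℝ) ≤ -I1)]
  have hI2pos : (0:ℝ) ≤ I2 := le_trans (by positivity) hI2
  have hKI2 : 2 / π ^ 2 * (1 / (2 * (1 + β) ^ 2)) ≤ K * I2 := by
    have h1 : 2 / π ^ 2 * I2 ≤ K * I2 := mul_le_mul_of_nonneg_right hK1 hI2pos
    have h2 : 2 / π ^ 2 * (1 / (2 * (1 + β) ^ 2)) ≤ 2 / π ^ 2 * I2 :=
      mul_le_mul_of_nonneg_left hI2 (by positivity)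
    linarith
  have hexp : 2 / π ^ 2 * (1 / (2 * (1 + β) ^ 2)) = 1 / (π ^ 2 * (1 + β) ^ 2) := by
    field_simp
  rw [mul_add, div_le_iff₀ ht2]
  have hE : -3 + 1 / (π ^ 2 * (1 + β) ^ 2) ≤ 1 + (K * I1 + K * I2) := by
    rw [← hexp]
    linarith
  have hmul := mul_le_mul_of_nonneg_right hE ht2.le
  have heq2 : (-3 + 1 / (π ^ 2 * (1 + β) ^ 2)) * (1 + β) ^ 2
      = -3 * (1 + β) ^ 2 + 1 / π ^ 2 := by
    field_simp
  rw [heq2] at hmul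
  have hπsq : π ^ 2 < 10 := by nlinarith
  have hpi10 : (1:ℝ)/10 ≤ 1 / π ^ 2 := by
    rw [div_le_div_iff₀ (by norm_num) (by positivity)]
    linarith
  have htsq : (1 + β) ^ 2 < 1/100 := by nlinarith
  linarith
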